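/- Let $E(\mathcal{F})$ be a homogeneous Moran set determined by a closed interval $J$ of length $\delta > 0$, a sequence $(n_k)$ of integers with $n_k \ge 2$, and a sequence $(c_k)$ of reals with $0 < c_k < 1$, $n_1 c_1 \le \delta$, and $n_k c_k \le 1$ for all $k$. Then $\liminf_{k\to\infty} \frac{\log(n_1 n_2 \cdots n_k)}{-\log(c_1 c_2 \cdots c_{k+1} n_{k+1})} \le \dim_H E(\mathcal{F}) \le \liminf_{k\to\infty} \frac{\log(n_1 n_2 \cdots n_k)}{-\log(c_1 c_2 \cdots c_k)}$. -/

import Mathlib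

open scoped Classical ENNReal
open Filter MeasureTheory

noncomputable section
set_option linter.unusedSectionVars false
set_option maxHeartbeats 1000000

/-- Index lists: `l` is a valid address at depth `l.length`, its `j`-th entry
choosing one of the `nk j` children at level `j + 1`. -/
def ValidAddr (nk : ℕ → ℕ) (l : List ℕ) : Prop :=
  ∀ j : ℕ, ∀ h : j < l.length, l.get ⟨j, h⟩ < nk j

/-- The collection `Js` of closed subintervals of `J` has homogeneous Moran
structure with branching numbers `nk` and contraction ratios `ck`
(indexed from `0`, so `nk k` is the paper's `n_{k+1}`). -/
def HomogMoranStructure (J : Set ℝ) (nk : ℕ → ℕ) (ck : ℕ → ℝ)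
    (Js : List ℕ → Set ℝ) : Prop :=
  Js [] = J ∧
  (∀ l : List ℕ, ValidAddr nk l →
    ∀ i < nk l.length, Js (l ++ [i]) ⊆ Js l) ∧
  (∀ l : List ℕ, ValidAddr nk l → ∀ i j, i < nk l.length → j < nk l.length →
    i ≠ j → interior (Js (l ++ [i])) ∩ interior (Js (l ++ [j])) = ∅) ∧
  (∀ l : List ℕ, ValidAddr nk l → ∀ i < nk l.length,
    volume (Js (l ++ [i])) = ENNReal.ofReal (ck l.length) * volume (Js l)) ∧
  (∀ l : List ℕ, ValidAddr nk l → ∀ i < nk l.length,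
    ∃ a b : ℝ, a ≤ b ∧ Js (l ++ [i]) = Set.Icc a b)

/-- The homogeneous Moran set determined by `Js`. -/
def MoranSet (nk : ℕ → ℕ) (Js : List ℕ → Set ℝ) : Set ℝ :=
  ⋂ k ∈ Set.Ici 1, ⋃ l ∈ {l : List ℕ | l.length = k ∧ ValidAddr nk l}, Js l

namespace MoranProof

/-- number of level-`k` intervals -/
def N (nk : ℕ → ℕ) (k : ℕ) : ℕ := ∏ i ∈ Finset.range k, nk i

/-- product of contraction ratios -/
def C (ck : ℕ → ℝ) (k : ℕ) : ℝ := ∏ i ∈ Finset.range k, ck i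

lemma N_succ (nk : ℕ → ℕ) (k : ℕ) : N nk (k+1) = N nk k * nk k :=
  Finset.prod_range_succ _ _

lemma C_succ (ck : ℕ → ℝ) (k : ℕ) : C ck (k+1) = C ck k * ck k :=
  Finset.prod_range_succ _ _

lemma N_pos (nk : ℕ → ℕ) (hnk : ∀ k, 2 ≤ nk k) (k : ℕ) : 0 < N nk k :=
  Finset.prod_pos fun i _ => lt_of_lt_of_le two_pos (hnk i)

lemma two_pow_le_N (nk : ℕ → ℕ) (hnk : ∀ k, 2 ≤ nk k) (k : ℕ) : 2 ^ k ≤ N nk k := by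
  induction k with
  | zero => simp [N]
  | succ k ih =>
    rw [N_succ, pow_succ]
    exact Nat.mul_le_mul ih (hnk k)

lemma C_pos (ck : ℕ → ℝ) (hck : ∀ k, 0 < ck k ∧ ck k < 1) (k : ℕ) : 0 < C ck k :=
  Finset.prod_pos fun i _ => (hck i).1

lemma C_le_one (ck : ℕ → ℝ) (hck : ∀ k, 0 < ck k ∧ ck k < 1) (k : ℕ) : C ck k ≤ 1 := by
  apply Finset.prod_le_one (fun i _ => (hck i).1.le) (fun i _ => (hck i).2.le)

section Main

variable {u δ : ℝ} {nk : ℕ → ℕ} {ck : ℕ → ℝ} {Js : List ℕ → Set ℝ}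
variable (hδ : 0 < δ) (hnk : ∀ k, 2 ≤ nk k) (hck : ∀ k, 0 < ck k ∧ ck k < 1)
variable (hfirst : (nk 0 : ℝ) * ck 0 ≤ δ) (hrest : ∀ k, (nk k : ℝ) * ck k ≤ 1)

include hnk hck hrest in
lemma ck_le_half (k : ℕ) : ck k ≤ 1 / 2 := by
  have h2 : (2 : ℝ) ≤ (nk k : ℝ) := by exact_mod_cast hnk k
  have := hrest k
  have hc := (hck k).1
  nlinarith

include hnk hck hrest in
lemma C_le_geom (k : ℕ) : C ck (k + 1) ≤ ck 0 * (1/2) ^ k := by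
  induction k with
  | zero => simp [C_succ, C]
  | succ k ih =>
    rw [C_succ]
    have h1 : ck (k+1) ≤ 1/2 := ck_le_half hnk hck hrest (k+1)
    have h2 : 0 < ck (k+1) := (hck (k+1)).1
    have h3 : 0 < C ck (k+1) := C_pos ck hck (k+1)
    calc C ck (k+1) * ck (k+1) ≤ (ck 0 * (1/2)^k) * (1/2) := by
          apply mul_le_mul ih h1 h2.le
          exact mul_nonneg (hck 0).1.le (by positivity)
      _ = ck 0 * (1/2)^(k+1) := by ring
  
include hnk hck hrest in
lemma C_tendsto : Tendsto (fun k => C ck k) atTop (nhds 0) := by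
  have h0 : Tendsto (fun k : ℕ => ck 0 * (1/2) ^ k) atTop (nhds 0) := by
    rw [show (0:ℝ) = ck 0 * 0 by ring]
    exact (tendsto_pow_atTop_nhds_zero_of_lt_one (by norm_num) (by norm_num)).const_mul _
  apply squeeze_zero' (Eventually.of_forall (fun k => (C_pos ck hck k).le)) ?_
    (h0.comp (tendsto_sub_atTop_nat 1))
  filter_upwards [eventually_ge_atTop 1] with k hk
  have : k - 1 + 1 = k := by omega
  calc C ck k = C ck (k - 1 + 1) := by rw [this]
    _ ≤ ck 0 * (1/2) ^ (k-1) := C_le_geom hnk hck hrest (k-1)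

include hδ hnk hck hfirst hrest in
lemma NC_le_delta (k : ℕ) : (N nk (k+1) : ℝ) * C ck (k+1) ≤ δ := by
  induction k with
  | zero => simpa [N, C, N_succ, C_succ] using hfirst
  | succ k ih =>
    have h1 : (N nk (k+2) : ℝ) * C ck (k+2)
        = ((N nk (k+1) : ℝ) * C ck (k+1)) * ((nk (k+1) : ℝ) * ck (k+1)) := by
      rw [N_succ, C_succ]; push_cast; ring
    rw [h1]
    have h2 := hrest (k+1)
    have h3 : 0 ≤ (N nk (k+1) : ℝ) * C ck (k+1) := by
      have := C_pos ck hck (k+1)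
      positivity
    nlinarith

/-- mixed-radix address of `m` at depth `k` -/
def addr (nk : ℕ → ℕ) : ℕ → ℕ → List ℕ
  | 0, _ => []
  | k+1, m => addr nk k (m / nk k) ++ [m % nk k]

lemma addr_length (k m : ℕ) : (addr nk k m).length = k := by
  induction k generalizing m with
  | zero => rfl
  | succ k ih => simp [addr, ih]

lemma addr_succ (k m : ℕ) :
    addr nk (k+1) m = addr nk k (m / nk k) ++ [m % nk k] := rfl

lemma valid_append_iff {l : List ℕ} {i : ℕ} :
    ValidAddr nk (l ++ [i]) ↔ ValidAddr nk l ∧ i < nk l.length := by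
  constructor
  · intro h
    refine ⟨fun j hj => ?_, ?_⟩
    · have := h j (by simp; omega)
      rwa [List.get_eq_getElem, List.getElem_append_left hj] at this
    · have := h l.length (by simp)
      rw [List.get_eq_getElem, List.getElem_append_right (le_refl _)] at this
      simpa using this
  · rintro ⟨h1, h2⟩ j hj
    simp only [List.length_append, List.length_singleton] at hj
    rcases lt_or_ge j l.length with hj' | hj'
    · rw [List.get_eq_getElem, List.getElem_append_left hj']
      exact h1 j hj'
    · have : j = l.length := by omega
      subst this
      rw [List.get_eq_getElem, List.getElem_append_right (le_refl _)]
      simpa using h2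


include hnk in
lemma addr_valid (k m : ℕ) : ValidAddr nk (addr nk k m) := by
  induction k generalizing m with
  | zero => intro j h; simp [addr] at h
  | succ k ih =>
    rw [addr_succ]
    refine valid_append_iff.mpr ⟨ih _, ?_⟩
    rw [addr_length]
    exact Nat.mod_lt _ (by have := hnk k; omega)

include hnk in
lemma addr_surj (k : ℕ) (l : List ℕ) (hlen : l.length = k) (hv : ValidAddr nk l) :
    ∃ m < N nk k, addr nk k m = l := by
  induction k generalizing l with
  | zero =>
    exact ⟨0, N_pos nk hnk 0, by simp [addr, List.length_eq_zero_iff.mp hlen]⟩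
  | succ k ih =>
    have hne : l ≠ [] := by intro h; subst h; simp at hlen
    obtain ⟨l', i, rfl⟩ : ∃ l' i, l = l' ++ [i] :=
      ⟨l.dropLast, l.getLast hne, (List.dropLast_append_getLast hne).symm⟩
    rw [valid_append_iff] at hv
    have hlen' : l'.length = k := by simpa using hlen
    obtain ⟨m', hm', heq⟩ := ih l' hlen' hv.1
    have hi : i < nk k := by rw [hlen'] at hv; exact hv.2
    have hn0 : 0 < nk k := by have := hnk k; omega
    refine ⟨i + m' * nk k, ?_, ?_⟩
    · rw [N_succ]
      calc i + m' * nk k < nk k + m' * nk k := by omega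
        _ = (m' + 1) * nk k := by ring
        _ ≤ N nk k * nk k := Nat.mul_le_mul_right _ (by omega)
    · have hdiv : (i + m' * nk k) / nk k = m' := by
        rw [Nat.add_mul_div_right _ _ hn0, Nat.div_eq_of_lt hi]; omega
      have hmod : (i + m' * nk k) % nk k = i := by
        rw [Nat.add_mul_mod_self_right, Nat.mod_eq_of_lt hi]
      rw [addr_succ, hdiv, hmod, heq]

variable (hM : HomogMoranStructure (Set.Icc u (u + δ)) nk ck Js)

/-- left endpoint of a basic interval -/
def pt (Js : List ℕ → Set ℝ) (l : List ℕ) : ℝ := sInf (Js l)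

include hδ hM in
lemma Js_shape {l : List ℕ} (hv : ValidAddr nk l) :
    ∃ a b : ℝ, a ≤ b ∧ Js l = Set.Icc a b := by
  induction l using List.reverseRecOn with
  | nil =>
    exact ⟨u, u + δ, by linarith, hM.1⟩

  | append_singleton l i ih =>
    rw [valid_append_iff] at hv
    exact hM.2.2.2.2 l hv.1 i hv.2

include hδ hck hM in
lemma Js_volume {l : List ℕ} (hv : ValidAddr nk l) :
    volume (Js l) = ENNReal.ofReal (δ * C ck l.length) := by
  induction l using List.reverseRecOn with
  | nil => simp [hM.1, Real.volume_Icc, C]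
  | append_singleton l i ih =>
    rw [valid_append_iff] at hv
    rw [hM.2.2.2.1 l hv.1 i hv.2, ih hv.1, ← ENNReal.ofReal_mul (hck l.length).1.le]
    simp only [List.length_append, List.length_singleton]
    rw [C_succ]
    ring_nf

include hδ hck hM in
lemma Js_eq_Icc {l : List ℕ} (hv : ValidAddr nk l) :
    Js l = Set.Icc (pt Js l) (pt Js l + δ * C ck l.length) := by
  obtain ⟨a, b, hab, h⟩ := Js_shape hδ hM hv
  have hvol := Js_volume hδ hck hM hv
  rw [h, Real.volume_Icc] at hvol
  have hC : 0 < δ * C ck l.length := mul_pos hδ (C_pos ck hck _)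
  have hba : b - a = δ * C ck l.length := by
    rw [ENNReal.ofReal_eq_ofReal_iff (by linarith) hC.le] at hvol
    exact hvol
  rw [h, pt, h, csInf_Icc hab]
  rw [show b = a + δ * C ck l.length by linarith]

include hδ hck hM in
lemma pt_mem {l : List ℕ} (hv : ValidAddr nk l) : pt Js l ∈ Js l := by
  rw [Js_eq_Icc hδ hck hM hv]
  have := mul_pos hδ (C_pos ck hck l.length)
  exact Set.mem_Icc.mpr ⟨le_rfl, by linarith⟩

include hM in
lemma Js_subset {l : List ℕ} (hv : ValidAddr nk l) {i : ℕ} (hi : i < nk l.length) :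
    Js (l ++ [i]) ⊆ Js l := hM.2.1 l hv i hi

include hδ hnk hck hM in
lemma interior_disjoint (k : ℕ) {m m' : ℕ} (hm : m < N nk k) (hm' : m' < N nk k)
    (hne : m ≠ m') :
    interior (Js (addr nk k m)) ∩ interior (Js (addr nk k m')) = ∅ := by
  induction k generalizing m m' with
  | zero => simp [N] at hm hm'; omega
  | succ k ih =>
    have hn0 : 0 < nk k := by have := hnk k; omega
    have hdm : m / nk k < N nk k := by
      rw [N_succ, Nat.mul_comm] at hm
      exact Nat.div_lt_of_lt_mul hm
    have hdm' : m' / nk k < N nk k := by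
      rw [N_succ, Nat.mul_comm] at hm'
      exact Nat.div_lt_of_lt_mul hm'
    rcases eq_or_ne (m / nk k) (m' / nk k) with hq | hq
    · have hr : m % nk k ≠ m' % nk k := by
        intro h
        have h1 := Nat.div_add_mod m (nk k)
        have h2 := Nat.div_add_mod m' (nk k)
        rw [hq, h] at h1
        exact hne (h1.symm.trans h2)
      rw [addr_succ, addr_succ, hq]
      have hlen : (addr nk k (m' / nk k)).length = k := addr_length k _
      exact hM.2.2.1 _ (addr_valid hnk k _) _ _ (by rw [hlen]; exact Nat.mod_lt _ hn0)
        (by rw [hlen]; exact Nat.mod_lt _ hn0) hr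
    · have hsub : ∀ q r : ℕ, r < nk k → interior (Js (addr nk k q ++ [r])) ⊆
          interior (Js (addr nk k q)) := by
        intro q r hr
        apply interior_mono
        have hlen : (addr nk k q).length = k := addr_length k _
        exact Js_subset hM (addr_valid hnk k q) (by rw [hlen]; exact hr)
      have := ih hdm hdm' hq
      apply Set.eq_empty_of_subset_empty
      calc interior (Js (addr nk (k+1) m)) ∩ interior (Js (addr nk (k+1) m'))
          ⊆ interior (Js (addr nk k (m / nk k))) ∩ interior (Js (addr nk k (m' / nk k))) := by
            rw [addr_succ, addr_succ]
            exact Set.inter_subset_inter (hsub _ _ (Nat.mod_lt _ hn0)) (hsub _ _ (Nat.mod_lt _ hn0))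
        _ = ∅ := this

/-- level-`k` address of the point coded by `x ∈ [0,1)` -/
def code (nk : ℕ → ℕ) (k : ℕ) (x : ℝ) : List ℕ := addr nk k ⌊x * N nk k⌋₊

include hnk in
lemma code_succ (k : ℕ) (x : ℝ) :
    code nk (k+1) x = code nk k x ++ [⌊x * N nk (k+1)⌋₊ % nk k] := by
  have hn0 : 0 < nk k := by have := hnk k; omega
  have hfl : ⌊x * N nk (k+1)⌋₊ / nk k = ⌊x * N nk k⌋₊ := by
    rw [← Nat.floor_div_natCast]
    congr 1
    rw [N_succ]
    push_cast
    field_simp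
  rw [code, addr_succ, hfl, code]

lemma code_length (k : ℕ) (x : ℝ) : (code nk k x).length = k := addr_length k _

include hnk in
lemma code_valid (k : ℕ) (x : ℝ) : ValidAddr nk (code nk k x) := addr_valid hnk k _

include hnk hM in
lemma Js_code_subset (k : ℕ) (x : ℝ) : Js (code nk (k+1) x) ⊆ Js (code nk k x) := by
  rw [code_succ hnk]
  apply Js_subset hM (code_valid hnk k x)
  rw [code_length]
  exact Nat.mod_lt _ (by have := hnk k; omega)

include hnk hM in
lemma Js_code_chain {k j : ℕ} (h : k ≤ j) (x : ℝ) :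
    Js (code nk j x) ⊆ Js (code nk k x) := by
  induction j with
  | zero => simp at h; subst h; exact subset_rfl
  | succ j ih =>
    rcases Nat.lt_or_ge k (j+1) with h' | h'
    · exact (Js_code_subset hnk hM j x).trans (ih (by omega))
    · have : k = j + 1 := by omega
      subst this; exact subset_rfl

/-- the approximating sequence of left endpoints -/
def ep (nk : ℕ → ℕ) (Js : List ℕ → Set ℝ) (k : ℕ) (x : ℝ) : ℝ := pt Js (code nk k x)

/-- the coded point of the Moran set -/
def point (nk : ℕ → ℕ) (Js : List ℕ → Set ℝ) (x : ℝ) : ℝ :=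
  limUnder atTop (fun k => ep nk Js k x)

include hδ hck hM in
lemma dist_le_of_mem_Js {l : List ℕ} (hv : ValidAddr nk l) {y z : ℝ}
    (hy : y ∈ Js l) (hz : z ∈ Js l) : dist y z ≤ δ * C ck l.length := by
  rw [Js_eq_Icc hδ hck hM hv] at hy hz
  rw [Set.mem_Icc] at hy hz
  rw [Real.dist_eq, abs_le]
  constructor <;> linarith

include hδ hnk hck hrest hM in
lemma ep_cauchy (x : ℝ) : CauchySeq (fun k => ep nk Js k x) := by
  apply cauchySeq_of_le_tendsto_0 (fun k => δ * C ck k)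
  · intro n m K hn hm
    have h1 : ep nk Js n x ∈ Js (code nk K x) :=
      Js_code_chain hnk hM hn x (pt_mem hδ hck hM (code_valid hnk n x))
    have h2 : ep nk Js m x ∈ Js (code nk K x) :=
      Js_code_chain hnk hM hm x (pt_mem hδ hck hM (code_valid hnk m x))
    have := dist_le_of_mem_Js hδ hck hM (code_valid hnk K x) h1 h2
    rwa [code_length] at this
  · rw [show (0:ℝ) = δ * 0 by ring]
    exact (C_tendsto hnk hck hrest).const_mul δ

include hδ hnk hck hrest hM in
lemma point_tendsto (x : ℝ) :
    Tendsto (fun k => ep nk Js k x) atTop (nhds (point nk Js x)) :=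
  (ep_cauchy hδ hnk hck hrest hM x).tendsto_limUnder

include hδ hnk hck hrest hM in
lemma point_mem_Js (k : ℕ) (x : ℝ) : point nk Js x ∈ Js (code nk k x) := by
  have hclosed : IsClosed (Js (code nk k x)) := by
    rw [Js_eq_Icc hδ hck hM (code_valid hnk k x)]
    exact isClosed_Icc
  apply hclosed.mem_of_tendsto (point_tendsto hδ hnk hck hrest hM x)
  filter_upwards [eventually_ge_atTop k] with j hj
  exact Js_code_chain hnk hM hj x (pt_mem hδ hck hM (code_valid hnk j x))

include hδ hnk hck hrest hM in
lemma point_measurable : Measurable (point nk Js) := by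
  apply measurable_of_tendsto_metrizable
    (f := fun k x => ep nk Js k x) (g := point nk Js)
  · intro k
    have : (fun x => ep nk Js k x)
        = (fun m : ℕ => pt Js (addr nk k m)) ∘ (fun x : ℝ => ⌊x * (N nk k : ℝ)⌋₊) := rfl
    rw [this]
    exact measurable_from_top.comp (Nat.measurable_floor.comp (measurable_id.mul_const _))
  · rw [tendsto_pi_nhds]
    exact fun x => point_tendsto hδ hnk hck hrest hM x

/-- the natural measure on the Moran set -/
def mu (nk : ℕ → ℕ) (Js : List ℕ → Set ℝ) : Measure ℝ :=
  Measure.map (point nk Js) (volume.restrict (Set.Ico (0:ℝ) 1))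

include hδ hnk hck hrest hM in
lemma mu_apply {s : Set ℝ} (hs : MeasurableSet s) :
    mu nk Js s = volume (point nk Js ⁻¹' s ∩ Set.Ico (0:ℝ) 1) := by
  rw [mu, Measure.map_apply (point_measurable hδ hnk hck hrest hM) hs,
    Measure.restrict_apply (point_measurable hδ hnk hck hrest hM hs)]

include hδ hnk hck hrest hM in
lemma mu_univ : mu nk Js Set.univ = 1 := by
  rw [mu_apply hδ hnk hck hrest hM MeasurableSet.univ]
  simp [Real.volume_Ico]

include hδ hck hM in
lemma moran_measurable : MeasurableSet (MoranSet nk Js) := by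
  apply MeasurableSet.biInter (Set.to_countable _)
  intro k _
  apply MeasurableSet.biUnion (Set.to_countable _)
  rintro l ⟨-, hv⟩
  rw [Js_eq_Icc hδ hck hM hv]
  exact measurableSet_Icc

include hδ hnk hck hrest hM in
lemma point_mem_moran (x : ℝ) : point nk Js x ∈ MoranSet nk Js := by
  rw [MoranSet]
  simp only [Set.mem_iInter, Set.mem_iUnion, Set.mem_setOf_eq]
  intro k _
  exact ⟨code nk k x, ⟨code_length k x, code_valid hnk k x⟩,
    point_mem_Js hδ hnk hck hrest hM k x⟩

include hδ hnk hck hrest hM in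
lemma mu_moran : mu nk Js (MoranSet nk Js) = 1 := by
  rw [mu_apply hδ hnk hck hrest hM (moran_measurable hδ hck hM)]
  have : point nk Js ⁻¹' MoranSet nk Js = Set.univ := by
    ext x
    simp [point_mem_moran hδ hnk hck hrest hM x]
  rw [this]
  simp [Real.volume_Ico]

/-- the set of level-`k` basic intervals touching `T` -/
def touch (nk : ℕ → ℕ) (Js : List ℕ → Set ℝ) (k : ℕ) (T : Set ℝ) : Finset ℕ :=
  (Finset.range (N nk k)).filter (fun m => (Js (addr nk k m) ∩ T).Nonempty)

include hδ hnk hck hrest hM in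
lemma preimage_subset_cyl (k : ℕ) (T : Set ℝ) :
    point nk Js ⁻¹' T ∩ Set.Ico (0:ℝ) 1 ⊆
      ⋃ m ∈ touch nk Js k T, Set.Ico ((m : ℝ) / N nk k) ((m + 1 : ℝ) / N nk k) := by
  rintro x ⟨hxT, hx0, hx1⟩
  have hN : (0:ℝ) < N nk k := by exact_mod_cast N_pos nk hnk k
  set m := ⌊x * N nk k⌋₊ with hm
  have hxN0 : 0 ≤ x * N nk k := mul_nonneg hx0 hN.le
  have hmlt : m < N nk k := by
    rw [hm]
    apply Nat.floor_lt hxN0 |>.mpr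
    calc x * N nk k < 1 * N nk k := by
          exact mul_lt_mul_of_pos_right hx1 hN
      _ = N nk k := one_mul _
  have hmem : m ∈ touch nk Js k T := by
    rw [touch, Finset.mem_filter]
    refine ⟨Finset.mem_range.mpr hmlt, ⟨point nk Js x, ?_, hxT⟩⟩
    exact point_mem_Js hδ hnk hck hrest hM k x
  apply Set.mem_biUnion hmem
  have h1 : (m : ℝ) ≤ x * N nk k := Nat.floor_le hxN0
  have h2 : x * N nk k < m + 1 := Nat.lt_floor_add_one _
  constructor
  · rw [div_le_iff₀ hN]; linarith
  · rw [lt_div_iff₀ hN]; linarith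

include hδ hnk hck hrest hM in
lemma mu_le_touch_card {k : ℕ} {T : Set ℝ} (hT : MeasurableSet T) :
    mu nk Js T ≤ (touch nk Js k T).card * ENNReal.ofReal (1 / N nk k) := by
  rw [mu_apply hδ hnk hck hrest hM hT]
  calc volume (point nk Js ⁻¹' T ∩ Set.Ico (0:ℝ) 1)
      ≤ volume (⋃ m ∈ touch nk Js k T, Set.Ico ((m : ℝ) / N nk k) ((m + 1 : ℝ) / N nk k)) :=
        measure_mono (preimage_subset_cyl hδ hnk hck hrest hM k T)
    _ ≤ ∑ m ∈ touch nk Js k T, volume (Set.Ico ((m : ℝ) / N nk k) ((m + 1 : ℝ) / N nk k)) :=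
        measure_biUnion_finset_le _ _
    _ = (touch nk Js k T).card * ENNReal.ofReal (1 / N nk k) := by
        have hN : (0:ℝ) < N nk k := by exact_mod_cast N_pos nk hnk k
        have : ∀ m : ℕ, volume (Set.Ico ((m : ℝ) / N nk k) ((m + 1 : ℝ) / N nk k))
            = ENNReal.ofReal (1 / N nk k) := by
          intro m
          rw [Real.volume_Ico]
          congr 1
          field_simp
          ring
        simp only [this, Finset.sum_const, nsmul_eq_mul]

include hδ hnk hck hM in
lemma touch_card_le {k : ℕ} {T : Set ℝ} {y0 w : ℝ} (hw : 0 ≤ w)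
    (hT : T ⊆ Set.Icc y0 (y0 + w)) :
    ((touch nk Js k T).card : ℝ) ≤ (w + δ * C ck k) / (δ * C ck k) + 1 := by
  set L := δ * C ck k with hLdef
  have hL0 : 0 < L := mul_pos hδ (C_pos ck hck k)
  set S := touch nk Js k T with hS
  set a : ℕ → ℝ := fun m => pt Js (addr nk k m) with ha
  have haJ : ∀ m, Js (addr nk k m) = Set.Icc (a m) (a m + L) := by
    intro m
    have := Js_eq_Icc hδ hck hM (addr_valid hnk k m)
    rwa [addr_length] at this
  have hrange : ∀ m ∈ S, y0 - L ≤ a m ∧ a m ≤ y0 + w := by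
    intro m hm
    rw [hS, touch, Finset.mem_filter] at hm
    obtain ⟨-, z, hz1, hz2⟩ := hm
    rw [haJ, Set.mem_Icc] at hz1
    have := hT hz2
    rw [Set.mem_Icc] at this
    constructor <;> linarith [hz1.1, hz1.2, this.1, this.2]
  have hsep : ∀ m ∈ S, ∀ m' ∈ S, m ≠ m' → L ≤ |a m - a m'| := by
    intro m hm m' hm' hne
    by_contra hlt
    push_neg at hlt
    rw [abs_lt] at hlt
    have hmN : m < N nk k := by
      rw [hS, touch, Finset.mem_filter, Finset.mem_range] at hm; exact hm.1
    have hm'N : m' < N nk k := by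
      rw [hS, touch, Finset.mem_filter, Finset.mem_range] at hm'; exact hm'.1
    have hdisj := interior_disjoint hδ hnk hck hM k hmN hm'N hne
    rw [haJ m, haJ m', interior_Icc, interior_Icc] at hdisj
    have : ((a m + a m' + L)/2) ∈ Set.Ioo (a m) (a m + L) ∩ Set.Ioo (a m') (a m' + L) := by
      constructor <;> (rw [Set.mem_Ioo]; constructor <;> nlinarith [hlt.1, hlt.2])
    rw [hdisj] at this
    exact this
  set φ : ℕ → ℕ := fun m => ⌊(a m - (y0 - L)) / L⌋₊ with hφ
  have hmaps : ∀ m ∈ S, φ m ∈ Finset.range (⌊(w + L)/L⌋₊ + 1) := by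
    intro m hm
    rw [Finset.mem_range, Nat.lt_succ_iff]
    apply Nat.floor_mono
    have hnum : a m - (y0 - L) ≤ w + L := by linarith [(hrange m hm).2]
    exact (div_le_div_iff_of_pos_right hL0).mpr hnum
  have hinj : Set.InjOn φ S := by
    intro m hm m' hm' heq
    by_contra hne
    have hsep' := hsep m hm m' hm' hne
    have h1 : 0 ≤ (a m - (y0 - L)) / L := by
      apply div_nonneg ?_ hL0.le
      linarith [(hrange m hm).1]
    have h1' : 0 ≤ (a m' - (y0 - L)) / L := by
      apply div_nonneg ?_ hL0.le
      linarith [(hrange m' hm').1]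
    have hf1 : (φ m : ℝ) ≤ (a m - (y0 - L)) / L := Nat.floor_le h1
    have hf2 : (a m - (y0 - L)) / L < φ m + 1 := Nat.lt_floor_add_one _
    have hf1' : (φ m' : ℝ) ≤ (a m' - (y0 - L)) / L := Nat.floor_le h1'
    have hf2' : (a m' - (y0 - L)) / L < φ m' + 1 := Nat.lt_floor_add_one _
    have heq' : φ m = φ m' := heq
    rw [heq'] at hf1 hf2
    have g1 : (φ m' : ℝ) * L ≤ a m - (y0 - L) := (le_div_iff₀ hL0).mp hf1
    have g2 : a m - (y0 - L) < ((φ m' : ℝ) + 1) * L := (div_lt_iff₀ hL0).mp hf2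
    have g3 : (φ m' : ℝ) * L ≤ a m' - (y0 - L) := (le_div_iff₀ hL0).mp hf1'
    have g4 : a m' - (y0 - L) < ((φ m' : ℝ) + 1) * L := (div_lt_iff₀ hL0).mp hf2'
    have habs : |a m - a m'| < L := by
      rw [abs_lt]
      constructor <;> nlinarith
    linarith [hsep', habs]
  have hcard : S.card ≤ ⌊(w + L)/L⌋₊ + 1 := by
    have := Finset.card_le_card_of_injOn φ hmaps hinj
    simpa using this
  calc (S.card : ℝ) ≤ ((⌊(w + L)/L⌋₊ + 1 : ℕ) : ℝ) := by exact_mod_cast hcard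
    _ ≤ (w + L)/L + 1 := by
        push_cast
        have := Nat.floor_le (show 0 ≤ (w+L)/L by positivity)
        linarith

include hδ hnk hck hrest hM in
lemma mu_Js_le (k m0 : ℕ) :
    mu nk Js (Js (addr nk k m0)) ≤ 3 * ENNReal.ofReal (1 / N nk k) := by
  set L := δ * C ck k with hLdef
  have hL0 : 0 < L := mul_pos hδ (C_pos ck hck k)
  have haJ : Js (addr nk k m0)
      = Set.Icc (pt Js (addr nk k m0)) (pt Js (addr nk k m0) + L) := by
    have := Js_eq_Icc hδ hck hM (addr_valid hnk k m0)
    rwa [addr_length] at this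
  have hcard : ((touch nk Js k (Js (addr nk k m0))).card : ℝ) ≤ 3 := by
    have h := touch_card_le hδ hnk hck hM (k := k) (T := Js (addr nk k m0))
      (y0 := pt Js (addr nk k m0)) (w := L) hL0.le (by rw [haJ])
    have h2 : (L + L) / L + 1 = 3 := by field_simp; ring
    rw [← hLdef] at h
    linarith [h, h2.le]
  have hcard' : (touch nk Js k (Js (addr nk k m0))).card ≤ 3 := by exact_mod_cast hcard
  calc mu nk Js (Js (addr nk k m0))
      ≤ (touch nk Js k (Js (addr nk k m0))).card * ENNReal.ofReal (1 / N nk k) :=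
        mu_le_touch_card hδ hnk hck hrest hM (by rw [haJ]; exact measurableSet_Icc)
    _ ≤ 3 * ENNReal.ofReal (1 / N nk k) := by
        apply mul_le_mul_left
        exact_mod_cast Nat.cast_le.mpr hcard'

include hδ hnk hck hrest hM in
lemma mu_singleton (y : ℝ) : mu nk Js {y} = 0 := by
  have hb : ∀ k : ℕ, mu nk Js {y} ≤ ENNReal.ofReal (2 * (1/2)^k) := by
    intro k
    have hL0 : 0 < δ * C ck k := mul_pos hδ (C_pos ck hck k)
    have hcard : ((touch nk Js k {y}).card : ℝ) ≤ 2 := by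
      have h := touch_card_le hδ hnk hck hM (k := k) (T := {y}) (y0 := y) (w := 0)
        le_rfl (by simp)
      have h2 : (0 + δ * C ck k) / (δ * C ck k) + 1 = 2 := by rw [zero_add, div_self hL0.ne']; norm_num
      linarith [h, h2.le]
    have hcard' : (touch nk Js k {y}).card ≤ 2 := by exact_mod_cast hcard
    calc mu nk Js {y}
        ≤ (touch nk Js k {y}).card * ENNReal.ofReal (1 / N nk k) :=
          mu_le_touch_card hδ hnk hck hrest hM (measurableSet_singleton y)
      _ ≤ 2 * ENNReal.ofReal (1 / N nk k) := by
          apply mul_le_mul_left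
          exact_mod_cast Nat.cast_le.mpr hcard'
      _ ≤ 2 * ENNReal.ofReal ((1/2)^k) := by
          apply mul_le_mul_right
          apply ENNReal.ofReal_le_ofReal
          rw [div_le_iff₀ (by exact_mod_cast N_pos nk hnk k : (0:ℝ) < N nk k)]
          have h2k : (2:ℝ)^k ≤ N nk k := by exact_mod_cast two_pow_le_N nk hnk k
          have : (1/2 : ℝ)^k * 2^k = 1 := by
            rw [← mul_pow]; norm_num
          nlinarith [pow_pos (show (0:ℝ) < 1/2 by norm_num) k]
      _ = ENNReal.ofReal (2 * (1/2)^k) := by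
          rw [ENNReal.ofReal_mul (by norm_num : (0:ℝ) ≤ 2)]
          norm_num
  have hlim : Tendsto (fun k : ℕ => ENNReal.ofReal (2 * (1/2)^k)) atTop (nhds 0) := by
    rw [show (0 : ℝ≥0∞) = ENNReal.ofReal 0 by simp]
    apply ENNReal.tendsto_ofReal
    rw [show (0:ℝ) = 2 * 0 by ring]
    exact (tendsto_pow_atTop_nhds_zero_of_lt_one (by norm_num) (by norm_num)).const_mul 2
  have := ge_of_tendsto' hlim hb
  simpa using this

include hck in
lemma C_anti {j j' : ℕ} (h : j ≤ j') : C ck j' ≤ C ck j := by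
  induction j' with
  | zero => simp at h; subst h; exact le_rfl
  | succ j' ih =>
    rcases Nat.lt_or_ge j (j'+1) with h' | h'
    · have h1 := ih (by omega)
      rw [C_succ]
      nlinarith [(hck j').1, (hck j').2, C_pos ck hck j']
    · have : j = j' + 1 := by omega
      subst this; exact le_rfl

/-- the union of the level-`k` basic intervals -/
def Ek (nk : ℕ → ℕ) (Js : List ℕ → Set ℝ) (k : ℕ) : Set ℝ :=
  ⋃ m ∈ Finset.range (N nk k), Js (addr nk k m)

include hδ hnk hck hM in
lemma Ek_measurable (k : ℕ) : MeasurableSet (Ek nk Js k) := by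
  apply MeasurableSet.biUnion (Set.to_countable _)
  intro m _
  rw [Js_eq_Icc hδ hck hM (addr_valid hnk k m)]
  exact measurableSet_Icc

include hδ hnk hck hrest hM in
lemma mu_compl_Ek (k : ℕ) : mu nk Js (Ek nk Js k)ᶜ = 0 := by
  rw [mu_apply hδ hnk hck hrest hM (Ek_measurable hδ hnk hck hM k).compl]
  have hempty : point nk Js ⁻¹' (Ek nk Js k)ᶜ ∩ Set.Ico (0:ℝ) 1 = ∅ := by
    ext x
    simp only [Set.mem_inter_iff, Set.mem_preimage, Set.mem_compl_iff, Set.mem_Ico,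
      Set.mem_empty_iff_false, iff_false, not_and]
    intro hxE hx0 hx1
    apply hxE
    have hN : (0:ℝ) < N nk k := by exact_mod_cast N_pos nk hnk k
    have hmlt : ⌊x * N nk k⌋₊ < N nk k := by
      apply (Nat.floor_lt (mul_nonneg hx0 hN.le)).mpr
      calc x * N nk k < 1 * N nk k := mul_lt_mul_of_pos_right hx1 hN
        _ = N nk k := one_mul _
    exact Set.mem_biUnion (Finset.mem_range.mpr hmlt) (point_mem_Js hδ hnk hck hrest hM k x)
  rw [hempty, measure_empty]

include hδ hnk hck hrest hM in
lemma mass_bound {s : ℝ} (hs0 : 0 < s) (hs1 : s ≤ 1) {K : ℕ}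
    (hK : ∀ k, K ≤ k → 1 ≤ (N nk k : ℝ) * ((δ * C ck (k+1)) * (nk k : ℝ)) ^ s)
    {T : Set ℝ} (hT : EMetric.diam T ≤ ENNReal.ofReal (δ * C ck (K+1) / 2)) :
    mu nk Js T ≤ ENNReal.ofReal 36 * EMetric.diam T ^ s := by
  rcases T.eq_empty_or_nonempty with rfl | ⟨y0, hy0⟩
  · simp
  have hDne : EMetric.diam T ≠ ⊤ := ne_top_of_le_ne_top ENNReal.ofReal_ne_top hT
  set d := (EMetric.diam T).toReal with hd
  have hd0 : 0 ≤ d := ENNReal.toReal_nonneg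
  have hDeq : EMetric.diam T = ENNReal.ofReal d := (ENNReal.ofReal_toReal hDne).symm
  have hTsub : T ⊆ Set.Icc (y0 - d) ((y0 - d) + 2*d) := by
    intro z hz
    have h1 : edist z y0 ≤ EMetric.diam T := EMetric.edist_le_diam_of_mem hz hy0
    have h2 : dist z y0 ≤ d := by
      rw [dist_edist]
      exact ENNReal.toReal_mono hDne h1
    rw [Real.dist_eq, abs_le] at h2
    rw [Set.mem_Icc]
    constructor <;> linarith [h2.1, h2.2]
  rcases hd0.eq_or_lt with hd0' | hd0'
  · -- diameter zero: T is inside a singleton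
    have hsub : T ⊆ {y0} := by
      intro z hz
      have hmem := hTsub hz
      rw [Set.mem_Icc] at hmem
      have h1 := hmem.1
      have h2 := hmem.2
      rw [← hd0'] at h1 h2
      simp only [Set.mem_singleton_iff]
      linarith
    calc mu nk Js T ≤ mu nk Js {y0} := measure_mono hsub
      _ = 0 := mu_singleton hδ hnk hck hrest hM y0
      _ ≤ _ := zero_le
  · -- main case : positive diameter
    have hdpos : 0 < d := hd0'
    -- find the level k
    have hdK : d < δ * C ck (K+1) := by
      have : d ≤ δ * C ck (K+1) / 2 := by
        have := ENNReal.toReal_mono ENNReal.ofReal_ne_top hT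
        rwa [ENNReal.toReal_ofReal (by have := C_pos ck hck (K+1); positivity)] at this
      have hCK := C_pos ck hck (K+1)
      nlinarith
    have hex : ∃ j, δ * C ck j ≤ d := by
      have htend : Tendsto (fun j => δ * C ck j) atTop (nhds 0) := by
        rw [show (0:ℝ) = δ * 0 by ring]
        exact (C_tendsto hnk hck hrest).const_mul δ
      have := htend.eventually_lt_const hdpos
      exact (this.mono fun j hj => hj.le).exists
    set j0 := Nat.find hex with hj0
    have hPj0 : δ * C ck j0 ≤ d := Nat.find_spec hex
    have hj0K : K + 1 < j0 := by
      by_contra hcon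
      push_neg at hcon
      have hmono : δ * C ck (K+1) ≤ δ * C ck j0 := by
        apply mul_le_mul_of_nonneg_left (C_anti hck hcon) hδ.le
      linarith
    set k := j0 - 1 with hk
    have hk1 : k + 1 = j0 := by omega
    have hkK : K ≤ k := by omega
    have hL' : δ * C ck (k+1) ≤ d := by rw [hk1]; exact hPj0
    have hLk : d < δ * C ck k := by
      have := Nat.find_min hex (m := k) (by omega)
      push_neg at this
      exact this
    set L' := δ * C ck (k+1) with hL'def
    set Lk := δ * C ck k with hLkdef
    have hL'0 : 0 < L' := mul_pos hδ (C_pos ck hck _)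
    have hLk0 : 0 < Lk := mul_pos hδ (C_pos ck hck _)
    have hn0 : 0 < nk k := by have := hnk k; omega
    have hNk : 0 < N nk k := N_pos nk hnk k
    have hNk1 : 0 < N nk (k+1) := N_pos nk hnk (k+1)
    set M := touch nk Js (k+1) T with hM'
    set cM := M.card with hcM
    -- bound 1 : cM ≤ 3 * nk k
    have hparents : ((touch nk Js k T).card : ℝ) < 4 := by
      have h := touch_card_le hδ hnk hck hM (k := k) (T := T) (y0 := y0 - d) (w := 2*d)
        (by linarith) hTsub
      have hq : (2*d + Lk)/Lk < 3 := by
        rw [div_lt_iff₀ hLk0]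
        nlinarith
      rw [← hLkdef] at h
      linarith
    have hparents' : (touch nk Js k T).card ≤ 3 := by
      have : ((touch nk Js k T).card : ℝ) < 4 := hparents
      exact_mod_cast Nat.lt_succ_iff.mp (by exact_mod_cast this)
    have hchild : ∀ m, Js (addr nk (k+1) m) ⊆ Js (addr nk k (m / nk k)) := by
      intro m
      rw [addr_succ]
      apply Js_subset hM (addr_valid hnk k _)
      rw [addr_length]
      exact Nat.mod_lt _ hn0
    have himg : M.image (fun m => m / nk k) ⊆ touch nk Js k T := by
      intro q hq
      rw [Finset.mem_image] at hq
      obtain ⟨m, hm, rfl⟩ := hq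
      rw [hM', touch, Finset.mem_filter, Finset.mem_range] at hm
      obtain ⟨hmN, z, hz1, hz2⟩ := hm
      rw [touch, Finset.mem_filter, Finset.mem_range]
      constructor
      · rw [N_succ, Nat.mul_comm] at hmN
        exact Nat.div_lt_of_lt_mul hmN
      · exact ⟨z, hchild m hz1, hz2⟩
    have hbound1 : cM ≤ nk k * 3 := by
      have hfib : ∀ q ∈ M.image (fun m => m / nk k),
          (M.filter (fun m => m / nk k = q)).card ≤ nk k := by
        intro q _
        have hsub2 : M.filter (fun m => m / nk k = q) ⊆
            Finset.Ico (nk k * q) (nk k * q + nk k) := by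
          intro m hm
          rw [Finset.mem_filter] at hm
          have h1 := Nat.div_add_mod m (nk k)
          have h2 := Nat.mod_lt m hn0
          rw [hm.2] at h1
          rw [Finset.mem_Ico]
          omega
        calc (M.filter (fun m => m / nk k = q)).card
            ≤ (Finset.Ico (nk k * q) (nk k * q + nk k)).card := Finset.card_le_card hsub2
          _ = nk k := by rw [Nat.card_Ico]; omega
      calc cM ≤ nk k * (M.image (fun m => m / nk k)).card :=
            Finset.card_le_mul_card_image M (nk k) hfib
        _ ≤ nk k * 3 := by
            apply Nat.mul_le_mul_left
            exact le_trans (Finset.card_le_card himg) hparents'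
    -- bound 2 : cM * L' ≤ 4 * d
    have hbound2 : (cM : ℝ) * L' ≤ 4 * d := by
      have h := touch_card_le hδ hnk hck hM (k := k+1) (T := T) (y0 := y0 - d) (w := 2*d)
        (by linarith) hTsub
      rw [← hL'def] at h
      have : ((cM:ℝ)) ≤ (2*d + L')/L' + 1 := h
      have h2 : ((2*d + L')/L' + 1) * L' = 2*d + 2*L' := by
        field_simp
        ring
      nlinarith [this, h2, hL'0]
    -- combine via rpow interpolation
    have hAs : (0:ℝ) < (nk k : ℝ) ^ s := Real.rpow_pos_of_pos (by exact_mod_cast hn0) s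
    have hBs : (0:ℝ) < L' ^ s := Real.rpow_pos_of_pos hL'0 s
    have hPs : (0:ℝ) < d ^ s := Real.rpow_pos_of_pos hdpos s
    have hstep : (cM : ℝ) * (L' ^ s * (nk k:ℝ) ^ s) ≤ 12 * (nk k:ℝ) * d ^ s := by
      rcases Nat.eq_zero_or_pos cM with hc0 | hcpos
      · rw [hc0]
        push_cast
        nlinarith
      have hcpos' : (0:ℝ) < cM := by exact_mod_cast hcpos
      -- cM * L'^s = cM^(1-s) * (cM * L')^s
      have hsplit : (cM:ℝ) * L' ^ s = (cM:ℝ) ^ (1-s) * ((cM:ℝ) * L') ^ s := by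
        rw [Real.mul_rpow hcpos'.le hL'0.le, ← mul_assoc, ← Real.rpow_add hcpos',
          show 1 - s + s = 1 by ring, Real.rpow_one]
      have h1 : (cM:ℝ) ^ (1-s) ≤ ((3:ℝ) * nk k) ^ (1-s) := by
        apply Real.rpow_le_rpow hcpos'.le ?_ (by linarith)
        have : (cM : ℝ) ≤ (nk k : ℝ) * 3 := by exact_mod_cast hbound1
        linarith
      have h2 : ((cM:ℝ) * L') ^ s ≤ (4 * d) ^ s :=
        Real.rpow_le_rpow (mul_pos hcpos' hL'0).le hbound2 hs0.le
      have h3 : ((3:ℝ) * nk k) ^ (1-s) = 3 ^ (1-s) * (nk k:ℝ) ^ (1-s) :=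
        Real.mul_rpow (by norm_num) (by positivity)
      have h4 : (3:ℝ) ^ (1-s) ≤ 3 := by
        calc (3:ℝ) ^ (1-s) ≤ 3 ^ (1:ℝ) :=
              Real.rpow_le_rpow_of_exponent_le (by norm_num) (by linarith)
          _ = 3 := Real.rpow_one 3
      have h5 : ((4:ℝ) * d) ^ s = 4 ^ s * d ^ s := Real.mul_rpow (by norm_num) hd0
      have h6 : (4:ℝ) ^ s ≤ 4 := by
        calc (4:ℝ) ^ s ≤ 4 ^ (1:ℝ) :=
              Real.rpow_le_rpow_of_exponent_le (by norm_num) hs1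
          _ = 4 := Real.rpow_one 4
      have h7 : (nk k:ℝ) ^ (1-s) * (nk k:ℝ) ^ s = (nk k:ℝ) := by
        rw [← Real.rpow_add (by exact_mod_cast hn0)]
        simp
      have hns : (0:ℝ) < (nk k:ℝ) ^ (1-s) := Real.rpow_pos_of_pos (by exact_mod_cast hn0) _
      calc (cM : ℝ) * (L' ^ s * (nk k:ℝ) ^ s)
          = ((cM:ℝ) * L' ^ s) * (nk k:ℝ) ^ s := by ring
        _ = ((cM:ℝ) ^ (1-s) * ((cM:ℝ) * L') ^ s) * (nk k:ℝ) ^ s := by rw [hsplit]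
        _ ≤ ((3 ^ (1-s) * (nk k:ℝ) ^ (1-s)) * (4 ^ s * d ^ s)) * (nk k:ℝ) ^ s := by
            apply mul_le_mul_of_nonneg_right ?_ hAs.le
            rw [← h3, ← h5]
            apply mul_le_mul h1 h2 (Real.rpow_nonneg (mul_pos hcpos' hL'0).le _) (Real.rpow_nonneg (mul_nonneg zero_le_three (Nat.cast_nonneg _)) _)
        _ = (3 ^ (1-s) * 4 ^ s) * d ^ s * ((nk k:ℝ) ^ (1-s) * (nk k:ℝ) ^ s) := by ring
        _ = (3 ^ (1-s) * 4 ^ s) * d ^ s * (nk k:ℝ) := by rw [h7]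
        _ ≤ (3 * 4) * d ^ s * (nk k:ℝ) := by
            apply mul_le_mul_of_nonneg_right ?_ (by exact_mod_cast hn0.le)
            apply mul_le_mul_of_nonneg_right ?_ hPs.le
            have h34 : (0:ℝ) < 3 ^ (1-s) := Real.rpow_pos_of_pos (by norm_num) _
            have h44 : (0:ℝ) < 4 ^ s := Real.rpow_pos_of_pos (by norm_num) _
            nlinarith
        _ = 12 * (nk k:ℝ) * d ^ s := by ring
    have hkey : 1 ≤ (N nk k : ℝ) * (L' ^ s * (nk k:ℝ) ^ s) := by
      have := hK k hkK
      rwa [Real.mul_rpow (by positivity) (by positivity)] at this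
    have hfinal : 3 * (cM : ℝ) ≤ 36 * d ^ s * N nk (k+1) := by
      have hNk1' : (N nk (k+1) : ℝ) = (N nk k : ℝ) * nk k := by
        rw [N_succ]; push_cast; ring
      have e1 : 3 * (cM:ℝ) ≤ 3 * (cM:ℝ) * ((N nk k : ℝ) * (L' ^ s * (nk k:ℝ) ^ s)) := by
        nlinarith [hkey, Nat.cast_nonneg (α := ℝ) cM]
      have e2 : 3 * (cM:ℝ) * ((N nk k : ℝ) * (L' ^ s * (nk k:ℝ) ^ s))
          = 3 * (N nk k : ℝ) * ((cM:ℝ) * (L' ^ s * (nk k:ℝ) ^ s)) := by ring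
      have e3 : 3 * (N nk k : ℝ) * ((cM:ℝ) * (L' ^ s * (nk k:ℝ) ^ s))
          ≤ 3 * (N nk k : ℝ) * (12 * (nk k:ℝ) * d ^ s) := by
        apply mul_le_mul_of_nonneg_left hstep
        positivity
      rw [hNk1']
      nlinarith [e1, e2, e3]
    -- measure-theoretic assembly
    set B := (⋃ m ∈ M, Js (addr nk (k+1) m)) ∪ (Ek nk Js (k+1))ᶜ with hB
    have hTB : T ⊆ B := by
      intro z hz
      by_cases hzE : z ∈ Ek nk Js (k+1)
      · left
        rw [Ek] at hzE
        rw [Set.mem_iUnion₂] at hzE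
        obtain ⟨m, hm, hzm⟩ := hzE
        have hmM : m ∈ M := by
          rw [hM', touch, Finset.mem_filter]
          exact ⟨hm, ⟨z, hzm, hz⟩⟩
        exact Set.mem_biUnion hmM hzm
      · right; exact hzE
    have hBmeas : MeasurableSet B := by
      apply MeasurableSet.union
      · apply MeasurableSet.biUnion (Set.to_countable _)
        intro m _
        rw [Js_eq_Icc hδ hck hM (addr_valid hnk (k+1) m)]
        exact measurableSet_Icc
      · exact (Ek_measurable hδ hnk hck hM (k+1)).compl
    have hmuB : mu nk Js B ≤ cM * (3 * ENNReal.ofReal (1 / N nk (k+1))) := by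
      calc mu nk Js B ≤ mu nk Js (⋃ m ∈ M, Js (addr nk (k+1) m))
            + mu nk Js (Ek nk Js (k+1))ᶜ := measure_union_le _ _
        _ = mu nk Js (⋃ m ∈ M, Js (addr nk (k+1) m)) := by
            rw [mu_compl_Ek hδ hnk hck hrest hM (k+1), add_zero]
        _ ≤ ∑ m ∈ M, mu nk Js (Js (addr nk (k+1) m)) := measure_biUnion_finset_le _ _
        _ ≤ ∑ _m ∈ M, 3 * ENNReal.ofReal (1 / N nk (k+1)) :=
            Finset.sum_le_sum fun m _ => mu_Js_le hδ hnk hck hrest hM (k+1) m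
        _ = cM * (3 * ENNReal.ofReal (1 / N nk (k+1))) := by
            rw [Finset.sum_const, nsmul_eq_mul]
    have hmuT : mu nk Js T ≤ ENNReal.ofReal ((cM : ℝ) * (3 * (1 / N nk (k+1)))) := by
      calc mu nk Js T ≤ mu nk Js B := measure_mono hTB
        _ ≤ cM * (3 * ENNReal.ofReal (1 / N nk (k+1))) := hmuB
        _ = ENNReal.ofReal ((cM : ℝ) * (3 * (1 / N nk (k+1)))) := by
            rw [ENNReal.ofReal_mul (Nat.cast_nonneg _), ENNReal.ofReal_mul (by norm_num)]
            congr 1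
            · exact (ENNReal.ofReal_natCast cM).symm
            · congr 1
              norm_num
    calc mu nk Js T ≤ ENNReal.ofReal ((cM : ℝ) * (3 * (1 / N nk (k+1)))) := hmuT
      _ ≤ ENNReal.ofReal (36 * d ^ s) := by
          apply ENNReal.ofReal_le_ofReal
          have hN1 : (0:ℝ) < N nk (k+1) := by exact_mod_cast hNk1
          have heq2 : (cM : ℝ) * (3 * (1 / N nk (k+1))) = (3 * cM) / N nk (k+1) := by
            field_simp
          rw [heq2, div_le_iff₀ hN1]
          exact hfinal
      _ = ENNReal.ofReal 36 * EMetric.diam T ^ s := by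
          rw [ENNReal.ofReal_mul (by norm_num), hDeq,
            ENNReal.ofReal_rpow_of_pos hdpos]

include hδ hnk hck hrest hM in
lemma dim_lower {s : ℝ} (hs0 : 0 < s) (hs1 : s ≤ 1) {K : ℕ}
    (hK : ∀ k, K ≤ k → 1 ≤ (N nk k : ℝ) * ((δ * C ck (k+1)) * (nk k : ℝ)) ^ s) :
    ENNReal.ofReal s ≤ dimH (MoranSet nk Js) := by
  set μ' := (ENNReal.ofReal 36)⁻¹ • mu nk Js with hμ'
  have h36 : (ENNReal.ofReal 36) ≠ 0 := by simp
  have h36' : (ENNReal.ofReal 36) ≠ ⊤ := ENNReal.ofReal_ne_top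
  have hε0 : (0:ℝ≥0∞) < ENNReal.ofReal (δ * C ck (K+1) / 2) := by
    rw [ENNReal.ofReal_pos]
    have := C_pos ck hck (K+1)
    positivity
  have hle : μ' ≤ μH[s] := by
    apply Measure.le_hausdorffMeasure s μ' (ENNReal.ofReal (δ * C ck (K+1) / 2)) hε0
    intro T hT
    rw [hμ', Measure.smul_apply, smul_eq_mul]
    calc (ENNReal.ofReal 36)⁻¹ * mu nk Js T
        ≤ (ENNReal.ofReal 36)⁻¹ * (ENNReal.ofReal 36 * EMetric.diam T ^ s) := by
          apply mul_le_mul_right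
          exact mass_bound hδ hnk hck hrest hM hs0 hs1 hK hT
      _ = EMetric.diam T ^ s := by
          rw [← mul_assoc, ENNReal.inv_mul_cancel h36 h36', one_mul]
  have hne : μH[s] (MoranSet nk Js) ≠ 0 := by
    have h1 : μ' (MoranSet nk Js) ≤ μH[s] (MoranSet nk Js) :=
      Measure.le_iff.mp hle _ (moran_measurable hδ hck hM)
    have h2 : μ' (MoranSet nk Js) = (ENNReal.ofReal 36)⁻¹ := by
      rw [hμ', Measure.smul_apply, smul_eq_mul, mu_moran hδ hnk hck hrest hM, mul_one]
    intro h0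
    rw [h0] at h1
    rw [h2] at h1
    simp only [le_zero_iff, ENNReal.inv_eq_zero] at h1
    exact h36' h1
  have := le_dimH_of_hausdorffMeasure_ne_zero (d := s.toNNReal) (by
    rwa [Real.coe_toNNReal s hs0.le])
  rwa [show ((s.toNNReal : ℝ≥0∞)) = ENNReal.ofReal s from rfl] at this

include hδ hnk hck hrest hM in
lemma dim_upper {dd B : ℝ} (hdd : 0 < dd)
    (hfreq : ∃ᶠ k in atTop, (N nk k : ℝ) * (δ * C ck k) ^ dd ≤ B) :
    dimH (MoranSet nk Js) ≤ ENNReal.ofReal dd := by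
  have hdiam : ∀ k (m : ℕ), Metric.ediam (Js (addr nk k m)) = ENNReal.ofReal (δ * C ck k) := by
    intro k m
    have h := Js_eq_Icc hδ hck hM (addr_valid hnk k m)
    rw [addr_length] at h
    rw [h, Real.ediam_Icc]
    congr 1
    ring
  have hcover : μH[dd] (MoranSet nk Js) ≤
      liminf (fun k => ∑ _i : Fin (N nk k), ENNReal.ofReal (δ * C ck k) ^ dd) atTop := by
    have h := Measure.hausdorffMeasure_le_liminf_sum (ι := fun k => Fin (N nk k)) dd
      (MoranSet nk Js) (l := atTop) (fun k => ENNReal.ofReal (δ * C ck k))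
      (by
        rw [show (0:ℝ≥0∞) = ENNReal.ofReal 0 by simp]
        apply ENNReal.tendsto_ofReal
        rw [show (0:ℝ) = δ * 0 by ring]
        exact (C_tendsto hnk hck hrest).const_mul δ)
      (fun k i => Js (addr nk k i.1))
      (Eventually.of_forall fun k => fun i => (hdiam k i.1).le)
      ?_
    · refine h.trans (le_of_eq ?_)
      congr 1
      funext k
      congr 1
      funext i
      rw [hdiam]
    · filter_upwards [eventually_ge_atTop 1] with k hk
      intro y hy
      rw [MoranSet] at hy
      rw [Set.mem_iInter] at hy
      have := hy k
      rw [Set.mem_iInter] at this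
      have := this hk
      rw [Set.mem_iUnion] at this
      obtain ⟨l, hl⟩ := this
      rw [Set.mem_iUnion] at hl
      obtain ⟨⟨hlen, hv⟩, hyl⟩ := hl
      obtain ⟨m, hm, rfl⟩ := addr_surj hnk k l hlen hv
      rw [Set.mem_iUnion]
      exact ⟨⟨m, hm⟩, hyl⟩
  have hsum : ∀ k : ℕ, (∑ _i : Fin (N nk k), ENNReal.ofReal (δ * C ck k) ^ dd)
      = ENNReal.ofReal ((N nk k : ℝ) * (δ * C ck k) ^ dd) := by
    intro k
    have hL0 : 0 < δ * C ck k := mul_pos hδ (C_pos ck hck k)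
    rw [Finset.sum_const, Finset.card_univ, Fintype.card_fin, nsmul_eq_mul,
      ENNReal.ofReal_rpow_of_pos hL0,
      ENNReal.ofReal_mul (by positivity), ENNReal.ofReal_natCast]
  have hlim : μH[dd] (MoranSet nk Js) ≤ ENNReal.ofReal B := by
    apply hcover.trans
    apply liminf_le_of_frequently_le'
    apply hfreq.mono
    intro k hk
    rw [hsum k]
    exact ENNReal.ofReal_le_ofReal hk
  have := dimH_le_of_hausdorffMeasure_ne_top (d := dd.toNNReal) (s := MoranSet nk Js) (by
    rw [Real.coe_toNNReal dd hdd.le]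
    exact fun h => absurd (h ▸ hlim) (by simp)
    )
  rwa [show ((dd.toNNReal : ℝ≥0∞)) = ENNReal.ofReal dd from rfl] at this

include hnk hck hrest in
lemma blog2_tendsto : Tendsto (fun k => -Real.log (C ck k)) atTop atTop := by
  have h1 : Tendsto (fun k => C ck k) atTop (nhdsWithin 0 (Set.Ioi 0)) := by
    apply tendsto_nhdsWithin_of_tendsto_nhds_of_eventually_within
    · exact C_tendsto hnk hck hrest
    · exact Eventually.of_forall fun k => C_pos ck hck k
  have h2 : Tendsto (fun k => Real.log (C ck k)) atTop atBot :=
    Real.tendsto_log_nhdsGT_zero.comp h1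
  exact tendsto_neg_atBot_atTop.comp h2

include hnk hck hrest in
lemma blog_tendsto :
    Tendsto (fun k => -Real.log (C ck (k+1) * (nk k : ℝ))) atTop atTop := by
  have hx0 : ∀ k, 0 < C ck (k+1) * (nk k : ℝ) := by
    intro k
    have := C_pos ck hck (k+1)
    have h2 : (0:ℝ) < nk k := by
      have := hnk k; exact_mod_cast (by omega : 0 < nk k)
    positivity
  have hxle : ∀ k, C ck (k+1) * (nk k : ℝ) ≤ C ck k := by
    intro k
    rw [C_succ]
    calc C ck k * ck k * nk k = C ck k * (nk k * ck k) := by ring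
      _ ≤ C ck k * 1 := by
          apply mul_le_mul_of_nonneg_left (hrest k) (C_pos ck hck k).le
      _ = C ck k := mul_one _
  have h1 : Tendsto (fun k => C ck (k+1) * (nk k : ℝ)) atTop (nhdsWithin 0 (Set.Ioi 0)) := by
    apply tendsto_nhdsWithin_of_tendsto_nhds_of_eventually_within
    · apply squeeze_zero (fun k => (hx0 k).le) hxle (C_tendsto hnk hck hrest)
    · exact Eventually.of_forall fun k => hx0 k
  have h2 : Tendsto (fun k => Real.log (C ck (k+1) * (nk k:ℝ))) atTop atBot :=
    Real.tendsto_log_nhdsGT_zero.comp h1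
  exact tendsto_neg_atBot_atTop.comp h2

include hδ hnk hck hfirst hrest in
lemma alog_le (k : ℕ) :
    Real.log (N nk k) ≤ Real.log δ + (-Real.log (C ck (k+1) * (nk k : ℝ))) := by
  have hx0 : (0:ℝ) < C ck (k+1) * (nk k : ℝ) := by
    have := C_pos ck hck (k+1)
    have h2 : (0:ℝ) < nk k := by exact_mod_cast (by have := hnk k; omega : 0 < nk k)
    positivity
  have hN0 : (0:ℝ) < N nk k := by exact_mod_cast N_pos nk hnk k
  have hprod : (N nk k : ℝ) * (C ck (k+1) * nk k) ≤ δ := by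
    have h := NC_le_delta hδ hnk hck hfirst hrest k
    have : (N nk (k+1) : ℝ) = (N nk k : ℝ) * nk k := by
      rw [N_succ]; push_cast; ring
    rw [this] at h
    nlinarith [h]
  have hlog : Real.log ((N nk k : ℝ) * (C ck (k+1) * nk k)) ≤ Real.log δ :=
    Real.log_le_log (by positivity) hprod
  rw [Real.log_mul hN0.ne' hx0.ne'] at hlog
  linarith

include hδ hnk hck hfirst hrest in
lemma alog_le2 {k : ℕ} (hk : 1 ≤ k) :
    Real.log (N nk k) ≤ Real.log δ + (-Real.log (C ck k)) := by
  have hC0 : (0:ℝ) < C ck k := C_pos ck hck k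
  have hN0 : (0:ℝ) < N nk k := by exact_mod_cast N_pos nk hnk k
  have hprod : (N nk k : ℝ) * C ck k ≤ δ := by
    obtain ⟨j, rfl⟩ : ∃ j, k = j + 1 := ⟨k - 1, by omega⟩
    exact NC_le_delta hδ hnk hck hfirst hrest j
  have hlog : Real.log ((N nk k : ℝ) * C ck k) ≤ Real.log δ :=
    Real.log_le_log (by positivity) hprod
  rw [Real.log_mul hN0.ne' hC0.ne'] at hlog
  linarith

include hnk in
lemma alog_nonneg (k : ℕ) : 0 ≤ Real.log (N nk k) := by
  apply Real.log_nonneg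
  exact_mod_cast N_pos nk hnk k

end Main
end MoranProof

open MoranProof in
theorem moran_dimH_bounds (u δ : ℝ) (hδ : 0 < δ) (nk : ℕ → ℕ) (ck : ℕ → ℝ)
    (Js : List ℕ → Set ℝ)
    (hnk : ∀ k, 2 ≤ nk k) (hck : ∀ k, 0 < ck k ∧ ck k < 1)
    (hfirst : (nk 0 : ℝ) * ck 0 ≤ δ) (hrest : ∀ k, (nk k : ℝ) * ck k ≤ 1)
    (hMoran : HomogMoranStructure (Set.Icc u (u + δ)) nk ck Js) :
    (Filter.liminf (fun k =>
        Real.log (∏ i ∈ Finset.range k, (nk i : ℝ)) /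
          (-Real.log ((∏ i ∈ Finset.range (k + 1), ck i) * nk k))) atTop
      ≤ (dimH (MoranSet nk Js)).toReal) ∧
    (dimH (MoranSet nk Js)).toReal
      ≤ Filter.liminf (fun k =>
          Real.log (∏ i ∈ Finset.range k, (nk i : ℝ)) /
            (-Real.log (∏ i ∈ Finset.range k, ck i))) atTop := by
  have hg1 : (fun k => Real.log (∏ i ∈ Finset.range k, (nk i : ℝ)) /
      (-Real.log ((∏ i ∈ Finset.range (k + 1), ck i) * nk k)))
      = fun k => Real.log (N nk k) / (-Real.log (C ck (k+1) * (nk k:ℝ))) := by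
    funext k
    rw [show (∏ i ∈ Finset.range k, (nk i:ℝ)) = ((N nk k : ℕ):ℝ) from (Nat.cast_prod _ _).symm]
    rfl
  have hg2 : (fun k => Real.log (∏ i ∈ Finset.range k, (nk i : ℝ)) /
      (-Real.log (∏ i ∈ Finset.range k, ck i)))
      = fun k => Real.log (N nk k) / (-Real.log (C ck k)) := by
    funext k
    rw [show (∏ i ∈ Finset.range k, (nk i:ℝ)) = ((N nk k : ℕ):ℝ) from (Nat.cast_prod _ _).symm]
    rfl
  have hdim1 : dimH (MoranSet nk Js) ≤ 1 := by
    calc dimH (MoranSet nk Js) ≤ dimH (Set.univ : Set ℝ) := dimH_mono (Set.subset_univ _)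
      _ = 1 := Real.dimH_univ
  have hdimtop : dimH (MoranSet nk Js) ≠ ⊤ := by
    intro h; rw [h] at hdim1; exact absurd hdim1 (by simp)
  have hbt := blog_tendsto hnk hck hrest
  have hbt2 := blog2_tendsto hnk hck hrest
  constructor
  · -- lower bound
    rw [hg1, liminf_eq]
    apply csSup_le
    · refine ⟨0, ?_⟩
      filter_upwards [hbt.eventually_gt_atTop 0] with k hk
      exact div_nonneg (alog_nonneg hnk k) hk.le
    · intro a ha
      simp only [Set.mem_setOf_eq] at ha
      have ha1 : a ≤ 1 := by
        by_contra hcon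
        push_neg at hcon
        obtain ⟨k, h1, h2, h3⟩ := (ha.and ((hbt.eventually_gt_atTop 0).and
          (hbt.eventually_gt_atTop (Real.log δ / (a - 1))))).exists
        have hA := alog_le hδ hnk hck hfirst hrest k
        have hab : a * (-Real.log (C ck (k+1) * (nk k:ℝ))) ≤ Real.log (N nk k) :=
          (le_div_iff₀ h2).mp h1
        rw [div_lt_iff₀ (by linarith : (0:ℝ) < a - 1)] at h3
        nlinarith [h2, h3, hA, hab]
      apply le_of_forall_pos_le_add
      intro ε hε
      rcases le_or_gt a ε with hsm | hsm
      · linarith [ENNReal.toReal_nonneg (a := dimH (MoranSet nk Js))]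
      set s := a - ε with hsdef
      have hs0 : 0 < s := by simp only [hsdef]; linarith
      have hs1 : s ≤ 1 := by simp only [hsdef]; linarith
      have hev : ∀ᶠ k in atTop, 1 ≤ (N nk k : ℝ) * ((δ * C ck (k+1)) * (nk k:ℝ)) ^ s := by
        filter_upwards [ha, hbt.eventually_gt_atTop 0,
          hbt.eventually_ge_atTop (|Real.log δ| / ε)] with k h1 h2 h3
        set b := -Real.log (C ck (k+1) * (nk k:ℝ)) with hb
        have hnkpos : (0:ℝ) < nk k := by exact_mod_cast (by have := hnk k; omega : 0 < nk k)
        have hCpos := C_pos ck hck (k+1)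
        have hx0 : (0:ℝ) < C ck (k+1) * (nk k:ℝ) := by positivity
        have hy0 : (0:ℝ) < (δ * C ck (k+1)) * (nk k:ℝ) := by positivity
        have hN0 : (0:ℝ) < N nk k := by exact_mod_cast N_pos nk hnk k
        have hab : a * b ≤ Real.log (N nk k) := (le_div_iff₀ h2).mp h1
        have hεb : |Real.log δ| ≤ ε * b := by
          rw [div_le_iff₀ hε] at h3
          linarith
        have hlogy : Real.log ((δ * C ck (k+1)) * (nk k:ℝ)) = Real.log δ - b := by
          rw [hb, show (δ * C ck (k+1)) * (nk k:ℝ) = δ * (C ck (k+1) * nk k) by ring,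
            Real.log_mul hδ.ne' hx0.ne']
          ring
        have habs1 : -Real.log δ ≤ |Real.log δ| := neg_le_abs _
        have h5a : s * (-Real.log δ) ≤ s * |Real.log δ| :=
          mul_le_mul_of_nonneg_left habs1 hs0.le
        have h5b : s * |Real.log δ| ≤ 1 * |Real.log δ| :=
          mul_le_mul_of_nonneg_right hs1 (abs_nonneg _)
        have hab2 : s * b + ε * b ≤ Real.log (N nk k) := by
          have hsb : s * b + ε * b = a * b := by rw [hsdef]; ring
          linarith
        have hkey : 0 ≤ Real.log (N nk k) + s * Real.log ((δ * C ck (k+1)) * (nk k:ℝ)) := by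
          rw [hlogy]
          nlinarith [hab2, hεb, h5a, h5b]
        calc (1:ℝ) = Real.exp 0 := Real.exp_zero.symm
          _ ≤ Real.exp (Real.log (N nk k)
              + s * Real.log ((δ * C ck (k+1)) * (nk k:ℝ))) := Real.exp_le_exp.mpr hkey
          _ = (N nk k:ℝ) * ((δ * C ck (k+1)) * (nk k:ℝ)) ^ s := by
              rw [Real.exp_add, Real.exp_log hN0, mul_comm s, ← Real.rpow_def_of_pos hy0]
      obtain ⟨K, hK⟩ := eventually_atTop.mp hev
      have hofr := dim_lower hδ hnk hck hrest hMoran hs0 hs1 hK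
      have hsle : s ≤ (dimH (MoranSet nk Js)).toReal := by
        have := ENNReal.toReal_mono hdimtop hofr
        rwa [ENNReal.toReal_ofReal hs0.le] at this
      simp only [hsdef] at hsle
      linarith
  · -- upper bound
    rw [hg2]
    have hev2pos : ∀ᶠ k in atTop, 0 ≤ Real.log (N nk k) / (-Real.log (C ck k)) := by
      filter_upwards [hbt2.eventually_gt_atTop 0] with k hk
      exact div_nonneg (alog_nonneg hnk k) hk.le
    have hub : ∀ᶠ k in atTop,
        Real.log (N nk k) / (-Real.log (C ck k)) ≤ 1 + |Real.log δ| := by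
      filter_upwards [hbt2.eventually_ge_atTop 1, eventually_ge_atTop 1] with k h2 h3
      have hA := alog_le2 hδ hnk hck hfirst hrest h3
      have hb0 : (0:ℝ) < -Real.log (C ck k) := by linarith
      rw [div_le_iff₀ hb0]
      have habs : Real.log δ ≤ |Real.log δ| := le_abs_self _
      nlinarith [alog_nonneg hnk k, abs_nonneg (Real.log δ), h2]
    have hbdd : BddAbove {x : ℝ | ∀ᶠ k in atTop,
        x ≤ Real.log (N nk k) / (-Real.log (C ck k))} := by
      refine ⟨1 + |Real.log δ|, ?_⟩
      intro x hx
      simp only [Set.mem_setOf_eq] at hx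
      obtain ⟨k, h1, h2⟩ := (hx.and hub).exists
      linarith
    set Λ := liminf (fun k => Real.log (N nk k) / (-Real.log (C ck k))) atTop with hΛ
    have hΛ0 : 0 ≤ Λ := by
      rw [hΛ, liminf_eq]
      exact le_csSup hbdd hev2pos
    have hkey : ∀ ε : ℝ, 0 < ε → dimH (MoranSet nk Js) ≤ ENNReal.ofReal (Λ + ε) := by
      intro ε hε
      have hcob : IsCoboundedUnder (· ≥ ·) atTop
          (fun k => Real.log (N nk k) / (-Real.log (C ck k))) :=
        isCoboundedUnder_ge_of_eventually_le atTop hub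
      have hfreq : ∃ᶠ k in atTop,
          Real.log (N nk k) / (-Real.log (C ck k)) < Λ + ε/2 :=
        frequently_lt_of_liminf_lt hcob (by rw [← hΛ]; linarith)
      have hdd0 : 0 < Λ + ε := by linarith
      have hfreqB : ∃ᶠ k in atTop, (N nk k : ℝ) * (δ * C ck k) ^ (Λ + ε)
          ≤ Real.exp ((Λ + ε) * |Real.log δ|) := by
        apply (hfreq.and_eventually (hbt2.eventually_gt_atTop 0)).mono
        rintro k ⟨h1, h2⟩
        set b := -Real.log (C ck k) with hb
        have hC0 : (0:ℝ) < C ck k := C_pos ck hck k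
        have hy0 : (0:ℝ) < δ * C ck k := by positivity
        have hN0 : (0:ℝ) < N nk k := by exact_mod_cast N_pos nk hnk k
        have hA : Real.log (N nk k) < (Λ + ε/2) * b := (div_lt_iff₀ h2).mp h1
        have hlogy : Real.log (δ * C ck k) = Real.log δ - b := by
          rw [hb, Real.log_mul hδ.ne' hC0.ne']
          ring
        have habs : Real.log δ ≤ |Real.log δ| := le_abs_self _
        have hle : Real.log ((N nk k:ℝ) * (δ * C ck k) ^ (Λ + ε))
            ≤ (Λ + ε) * |Real.log δ| := by
          rw [Real.log_mul hN0.ne' (Real.rpow_pos_of_pos hy0 (Λ + ε)).ne',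
            Real.log_rpow hy0, hlogy]
          have hsplit : (Λ + ε/2) * b = (Λ + ε) * b - (ε/2) * b := by ring
          have hpos : 0 < (ε/2) * b := mul_pos (half_pos hε) h2
          have habs2 : (Λ + ε) * Real.log δ ≤ (Λ + ε) * |Real.log δ| :=
            mul_le_mul_of_nonneg_left habs hdd0.le
          nlinarith [hA, hsplit, hpos, habs2]
        have hexp := Real.exp_le_exp.mpr hle
        rwa [Real.exp_log (by positivity)] at hexp
      exact dim_upper hδ hnk hck hrest hMoran hdd0 hfreqB
    have hfin : dimH (MoranSet nk Js) ≤ ENNReal.ofReal Λ := by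
      apply ENNReal.le_of_forall_pos_le_add
      intro ε hε _
      calc dimH (MoranSet nk Js) ≤ ENNReal.ofReal (Λ + ε) :=
            hkey ε (by exact_mod_cast hε)
        _ = ENNReal.ofReal Λ + ENNReal.ofReal ε := ENNReal.ofReal_add hΛ0 ε.coe_nonneg
        _ = ENNReal.ofReal Λ + ε := by rw [ENNReal.ofReal_coe_nnreal]
    calc (dimH (MoranSet nk Js)).toReal
        ≤ (ENNReal.ofReal Λ).toReal := ENNReal.toReal_mono ENNReal.ofReal_ne_top hfin
      _ = Λ := ENNReal.toReal_ofReal hΛ0
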